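/- Fix n ≥ 1. For a function g : {0,1,…,n} → ℝ define the averaged operator Ω̄_g := 3^{−n} · Σ_{c ∈ {1,2,3}^n} Σ_{s,t ∈ {0,1}^n} g(D(s,t)) · (⊗_{ℓ=1}^n |e_{c_ℓ}(s_ℓ)⟩⟨e_{c_ℓ}(s_ℓ)|) ⊗ (⊗_{ℓ=1}^n |e_{c_ℓ}(t_ℓ)⟩⟨e_{c_ℓ}(t_ℓ)|), an operator on (ℂ²)^{⊗n} ⊗ (ℂ²)^{⊗n}. Then Ω̄_g equals the full swap operator F exchanging the two n-qubit tensor copies if and only if g(d) = (−1)^d · 2^{n−d} for every d ∈ {0,1,…,n}. -/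

import Mathlib

open Matrix BigOperators
open scoped ComplexOrder

noncomputable section

abbrev QIdx (n : ℕ) := Fin n → Fin 2

def IsDensity {ι : Type*} [Fintype ι] [DecidableEq ι] (ρ : Matrix ι ι ℂ) : Prop :=
  ρ.PosSemidef ∧ ρ.trace = 1

/-- The operator on `(ℂ²)^{⊗k}` permuting the `k` tensor factors according to `π`. -/
def permOp {k : ℕ} (π : Equiv.Perm (Fin k)) : Matrix (Fin k → Fin 2) (Fin k → Fin 2) ℂ :=
  fun a b => if ∀ i, b i = a (π i) then 1 else 0

def pauliX : Matrix (Fin 2) (Fin 2) ℂ := !![0, 1; 1, 0]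
def pauliY : Matrix (Fin 2) (Fin 2) ℂ := !![0, -Complex.I; Complex.I, 0]
def pauliZ : Matrix (Fin 2) (Fin 2) ℂ := !![1, 0; 0, -1]

/-- `P^{⊗k}` on `(ℂ²)^{⊗k}`. -/
def pauliPow (k : ℕ) (P : Matrix (Fin 2) (Fin 2) ℂ) :
    Matrix (Fin k → Fin 2) (Fin k → Fin 2) ℂ :=
  fun a b => ∏ i, P (a i) (b i)

/-- The single-qubit Clifford fourth-moment operator `R_{4,Cl}` on `(ℂ²)^{⊗4}`. -/
def R4Cl : Matrix (Fin 4 → Fin 2) (Fin 4 → Fin 2) ℂ :=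
  -1 + ((1 : ℂ)/2) • (permOp (Equiv.swap 0 1) + permOp (Equiv.swap 2 3))
    + ((3 : ℂ)/4) • (1 + pauliPow 4 pauliX + pauliPow 4 pauliY + pauliPow 4 pauliZ)

/-- The single-qubit Haar fourth-moment operator `R_{4,H}` on `(ℂ²)^{⊗4}`. -/
def R4H : Matrix (Fin 4 → Fin 2) (Fin 4 → Fin 2) ℂ :=
  ((1 : ℂ)/5) • (1 + permOp (Equiv.swap 0 1) + permOp (Equiv.swap 2 3))
  + ((3 : ℂ)/5) • (permOp (Equiv.swap 0 1 * Equiv.swap 2 3)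
      + permOp (Equiv.swap 0 2 * Equiv.swap 1 3)
      + permOp (Equiv.swap 0 3 * Equiv.swap 1 2))
  - ((3 : ℂ)/10) • (permOp (Equiv.swap 0 2) + permOp (Equiv.swap 1 3)
      + permOp (Equiv.swap 0 3) + permOp (Equiv.swap 1 2))

/-- Per-qubit `n`-fold tensor power of an operator on `(ℂ²)^{⊗k}` (k replicas),
acting on `k` copies of `(ℂ²)^{⊗n}`. -/
def repPow (n : ℕ) {k : ℕ} (R : Matrix (Fin k → Fin 2) (Fin k → Fin 2) ℂ) :
    Matrix (Fin k → QIdx n) (Fin k → QIdx n) ℂ :=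
  fun a b => ∏ ℓ : Fin n, R (fun r => a r ℓ) (fun r => b r ℓ)

/-- The four-replica state `ρ ⊗ σ ⊗ ρ ⊗ σ`. -/
def rep4 {n : ℕ} (ρ σ : Matrix (QIdx n) (QIdx n) ℂ) :
    Matrix (Fin 4 → QIdx n) (Fin 4 → QIdx n) ℂ :=
  fun a b => ρ (a 0) (b 0) * σ (a 1) (b 1) * ρ (a 2) (b 2) * σ (a 3) (b 3)

/-- The pure state `|ψ⟩⟨ψ|`. -/
def pureState {ι : Type*} (ψ : ι → ℂ) : Matrix ι ι ℂ :=
  fun a b => ψ a * star (ψ b)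


/-- The three single-qubit Pauli measurement bases: `e 0` is the `X` basis `{|+⟩,|−⟩}`,
`e 1` the `Y` basis `{|i+⟩,|i−⟩}`, and `e 2` the `Z` basis `{|0⟩,|1⟩}`. -/
def pauliBasis : Fin 3 → Fin 2 → (Fin 2 → ℂ)
  | 0, 0 => ![1 / (Real.sqrt 2 : ℂ), 1 / (Real.sqrt 2 : ℂ)]
  | 0, 1 => ![1 / (Real.sqrt 2 : ℂ), -(1 / (Real.sqrt 2 : ℂ))]
  | 1, 0 => ![1 / (Real.sqrt 2 : ℂ), Complex.I / (Real.sqrt 2 : ℂ)]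
  | 1, 1 => ![1 / (Real.sqrt 2 : ℂ), -(Complex.I / (Real.sqrt 2 : ℂ))]
  | 2, 0 => ![1, 0]
  | 2, 1 => ![0, 1]

/-- The averaged operator `Ω̄_g` on `(ℂ²)^{⊗n} ⊗ (ℂ²)^{⊗n}` associated with a
Hamming-distance kernel `g`: the average over uniformly random local Pauli bases
`c ∈ {1,2,3}^n` of `Σ_{s,t} g(D(s,t)) |e_c(s)⟩⟨e_c(s)| ⊗ |e_c(t)⟩⟨e_c(t)|`. -/
def avgOp (n : ℕ) (g : ℕ → ℝ) :
    Matrix (QIdx n × QIdx n) (QIdx n × QIdx n) ℂ :=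
  fun p q => (1 / (3 : ℂ)^n) *
    ∑ c : Fin n → Fin 3, ∑ s : QIdx n, ∑ t : QIdx n,
      (g (hammingDist s t) : ℂ)
        * (∏ ℓ, pureState (pauliBasis (c ℓ) (s ℓ)) (p.1 ℓ) (q.1 ℓ))
        * (∏ ℓ, pureState (pauliBasis (c ℓ) (t ℓ)) (p.2 ℓ) (q.2 ℓ))

/-- The full swap operator `F` on `(ℂ²)^{⊗n} ⊗ (ℂ²)^{⊗n}`, exchanging the two `n`-qubit
tensor copies: `F(u ⊗ v) = v ⊗ u`. -/
def swapOp (n : ℕ) : Matrix (QIdx n × QIdx n) (QIdx n × QIdx n) ℂ :=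
  fun p q => if q = (p.2, p.1) then 1 else 0

set_option maxHeartbeats 1000000

def Nmat (e : Fin 2) (x y : Fin 2 × Fin 2) : ℂ :=
  ∑ c : Fin 3, ∑ s : Fin 2,
    (1/3 : ℂ) * (pureState (pauliBasis c s) x.1 y.1 * pureState (pauliBasis c (s+e)) x.2 y.2)

def alf : Fin 2 → ℂ := ![1/3, 2/3]
def bet : Fin 2 → ℂ := ![1/3, -1/3]


-- helper: sum over pi of products = product of sums
lemma sum_pi_prod {ι κ M : Type*} [Fintype ι] [DecidableEq ι] [Fintype κ] [DecidableEq κ]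
    [CommSemiring M] (F : ι → κ → M) :
    ∑ x : ι → κ, ∏ i, F i (x i) = ∏ i, ∑ j : κ, F i j := by
  rw [Finset.prod_univ_sum fun _ => (Finset.univ : Finset κ), Fintype.piFinset_univ]

lemma hamming_shift {n : ℕ} (s u : QIdx n) :
    hammingDist s (s + u) = hammingDist u 0 := by
  unfold hammingDist
  congr 1
  apply Finset.filter_congr
  intro i _
  simp [Pi.add_apply, eq_comm, left_eq_add]

lemma key (n : ℕ) (g : ℕ → ℝ) (p q : QIdx n × QIdx n) :
    avgOp n g p q = ∑ u : QIdx n, (g (hammingDist u (0 : QIdx n)) : ℂ) *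
      ∏ ℓ, Nmat (u ℓ) (p.1 ℓ, p.2 ℓ) (q.1 ℓ, q.2 ℓ) := by
  unfold avgOp
  have step1 : ∀ c : Fin n → Fin 3, ∀ s : QIdx n,
      (∑ t : QIdx n, (g (hammingDist s t) : ℂ)
        * (∏ ℓ, pureState (pauliBasis (c ℓ) (s ℓ)) (p.1 ℓ) (q.1 ℓ))
        * (∏ ℓ, pureState (pauliBasis (c ℓ) (t ℓ)) (p.2 ℓ) (q.2 ℓ)))
      = ∑ u : QIdx n, (g (hammingDist u (0:QIdx n)) : ℂ) *
          ∏ ℓ, (pureState (pauliBasis (c ℓ) (s ℓ)) (p.1 ℓ) (q.1 ℓ)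
             * pureState (pauliBasis (c ℓ) (s ℓ + u ℓ)) (p.2 ℓ) (q.2 ℓ)) := by
    intro c s
    rw [← Equiv.sum_comp (Equiv.addLeft s)]
    apply Finset.sum_congr rfl
    intro u _
    simp only [Equiv.coe_addLeft, Pi.add_apply]
    rw [hamming_shift, Finset.prod_mul_distrib]
    ring
  simp only [step1]
  have swap_su : ∀ c : Fin n → Fin 3,
      (∑ s : QIdx n, ∑ u : QIdx n, (g (hammingDist u (0:QIdx n)) : ℂ) *
          ∏ ℓ, (pureState (pauliBasis (c ℓ) (s ℓ)) (p.1 ℓ) (q.1 ℓ)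
             * pureState (pauliBasis (c ℓ) (s ℓ + u ℓ)) (p.2 ℓ) (q.2 ℓ)))
      = ∑ u : QIdx n, ∑ s : QIdx n, (g (hammingDist u (0:QIdx n)) : ℂ) *
          ∏ ℓ, (pureState (pauliBasis (c ℓ) (s ℓ)) (p.1 ℓ) (q.1 ℓ)
             * pureState (pauliBasis (c ℓ) (s ℓ + u ℓ)) (p.2 ℓ) (q.2 ℓ)) :=
    fun c => Finset.sum_comm
  simp only [swap_su]
  rw [Finset.sum_comm]
  rw [Finset.mul_sum]
  apply Finset.sum_congr rfl
  intro u _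
  simp only [← Finset.mul_sum]
  have inner_s : ∀ c : Fin n → Fin 3,
      (∑ s : QIdx n, ∏ ℓ, (pureState (pauliBasis (c ℓ) (s ℓ)) (p.1 ℓ) (q.1 ℓ)
             * pureState (pauliBasis (c ℓ) (s ℓ + u ℓ)) (p.2 ℓ) (q.2 ℓ)))
      = ∏ ℓ, ∑ S : Fin 2, (pureState (pauliBasis (c ℓ) S) (p.1 ℓ) (q.1 ℓ)
             * pureState (pauliBasis (c ℓ) (S + u ℓ)) (p.2 ℓ) (q.2 ℓ)) :=
    fun c => sum_pi_prod (fun ℓ S => pureState (pauliBasis (c ℓ) S) (p.1 ℓ) (q.1 ℓ)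
             * pureState (pauliBasis (c ℓ) (S + u ℓ)) (p.2 ℓ) (q.2 ℓ))
  simp only [inner_s]
  have inner_c :
      (∑ c : Fin n → Fin 3, ∏ ℓ, ∑ S : Fin 2,
          (pureState (pauliBasis (c ℓ) S) (p.1 ℓ) (q.1 ℓ)
             * pureState (pauliBasis (c ℓ) (S + u ℓ)) (p.2 ℓ) (q.2 ℓ)))
      = ∏ ℓ, ∑ C : Fin 3, ∑ S : Fin 2,
          (pureState (pauliBasis C S) (p.1 ℓ) (q.1 ℓ)
             * pureState (pauliBasis C (S + u ℓ)) (p.2 ℓ) (q.2 ℓ)) :=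
    sum_pi_prod (fun ℓ C => ∑ S : Fin 2, pureState (pauliBasis C S) (p.1 ℓ) (q.1 ℓ)
             * pureState (pauliBasis C (S + u ℓ)) (p.2 ℓ) (q.2 ℓ))
  rw [inner_c]
  have NmatProd : (∏ ℓ, Nmat (u ℓ) (p.1 ℓ, p.2 ℓ) (q.1 ℓ, q.2 ℓ))
      = (1/3 : ℂ)^n * ∏ ℓ, ∑ C : Fin 3, ∑ S : Fin 2,
          (pureState (pauliBasis C S) (p.1 ℓ) (q.1 ℓ)
             * pureState (pauliBasis C (S + u ℓ)) (p.2 ℓ) (q.2 ℓ)) := by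
    have hN : ∀ ℓ : Fin n, Nmat (u ℓ) (p.1 ℓ, p.2 ℓ) (q.1 ℓ, q.2 ℓ)
        = (1/3 : ℂ) * ∑ C : Fin 3, ∑ S : Fin 2,
          (pureState (pauliBasis C S) (p.1 ℓ) (q.1 ℓ)
             * pureState (pauliBasis C (S + u ℓ)) (p.2 ℓ) (q.2 ℓ)) := by
      intro ℓ
      simp only [Nmat, ← Finset.mul_sum]
    simp only [hN]
    rw [Finset.prod_mul_distrib, Finset.prod_const, Finset.card_univ, Fintype.card_fin]
  rw [NmatProd, one_div, one_div, inv_pow]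
  ring

def Fmat (x y : Fin 2 × Fin 2) : ℂ := if y = (x.2, x.1) then 1 else 0

lemma Nmat_eq (e : Fin 2) (x y : Fin 2 × Fin 2) :
    Nmat e x y = (if y = x then alf e else 0) + (if y = (x.2, x.1) then bet e else 0) := by
  obtain ⟨x1, x2⟩ := x
  obtain ⟨y1, y2⟩ := y
  have h2 : ((Real.sqrt 2 : ℝ) : ℂ) * ((Real.sqrt 2 : ℝ) : ℂ) = 2 := by
    rw [← Complex.ofReal_mul, Real.mul_self_sqrt (by norm_num)]; norm_num
  have h4 : ((Real.sqrt 2 : ℝ) : ℂ) ^ 4 = 4 := by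
    have : ((Real.sqrt 2 : ℝ) : ℂ) ^ 4 = (↑(Real.sqrt 2) * ↑(Real.sqrt 2)) * (↑(Real.sqrt 2) * ↑(Real.sqrt 2)) := by ring
    rw [this, h2]; norm_num
  have hr4 : (Real.sqrt 2) ^ 4 = 4 := by
    have : (Real.sqrt 2) ^ 4 = (Real.sqrt 2 * Real.sqrt 2) * (Real.sqrt 2 * Real.sqrt 2) := by ring
    rw [this, Real.mul_self_sqrt (by norm_num)]; norm_num
  have two : ∀ a : Fin 2, a = 0 ∨ a = 1 := by decide
  rcases two e with rfl | rfl <;> rcases two x1 with rfl | rfl <;> rcases two x2 with rfl | rfl <;>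
    rcases two y1 with rfl | rfl <;> rcases two y2 with rfl | rfl <;>
    · simp only [Nmat, pureState, pauliBasis, Fin.sum_univ_three, Fin.sum_univ_two, alf, bet,
        Prod.mk.injEq, Prod.ext_iff, show ((0:Fin 2)+(0:Fin 2))=0 from rfl,
        show ((0:Fin 2)+(1:Fin 2))=1 from rfl, show ((1:Fin 2)+(0:Fin 2))=1 from rfl,
        show ((1:Fin 2)+(1:Fin 2))=0 from rfl]
      norm_num [Matrix.cons_val_zero, Matrix.cons_val_one, Complex.ext_iff]
      try ring_nf
      try norm_num [h2, h4, hr4, Complex.ext_iff]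

lemma swap_prod (n : ℕ) (p q : QIdx n × QIdx n) :
    swapOp n p q = ∏ ℓ, Fmat (p.1 ℓ, p.2 ℓ) (q.1 ℓ, q.2 ℓ) := by
  unfold swapOp Fmat
  by_cases h : q = (p.2, p.1)
  · subst h
    simp
  · rw [if_neg h]
    have : ∃ ℓ : Fin n, ¬ ((q.1 ℓ, q.2 ℓ) = (p.2 ℓ, p.1 ℓ)) := by
      by_contra hc
      push_neg at hc
      apply h
      have h1 : q.1 = p.2 := funext fun ℓ => (Prod.mk.injEq _ _ _ _ ▸ (hc ℓ)).1
      have h2 : q.2 = p.1 := funext fun ℓ => (Prod.mk.injEq _ _ _ _ ▸ (hc ℓ)).2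
      exact Prod.ext h1 h2
    obtain ⟨ℓ, hℓ⟩ := this
    symm
    apply Finset.prod_eq_zero (Finset.mem_univ ℓ)
    rw [if_neg hℓ]

def hfac : Fin 2 → ℂ := ![2, -1]

lemma hfac_N (x y : Fin 2 × Fin 2) :
    ∑ e : Fin 2, hfac e * Nmat e x y = Fmat x y := by
  rw [Fin.sum_univ_two, Nmat_eq, Nmat_eq]
  unfold Fmat hfac alf bet
  split_ifs <;> norm_num

lemma wt_card {n : ℕ} (u : QIdx n) :
    hammingDist u (0 : QIdx n) = (Finset.univ.filter fun ℓ => ¬ (u ℓ = 0)).card := by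
  simp [hammingDist]

lemma prod_ite_pow {n : ℕ} (u : QIdx n) (t : ℂ) :
    (∏ ℓ, if u ℓ = 0 then (1:ℂ) else t) = t ^ (hammingDist u (0 : QIdx n)) := by
  rw [Finset.prod_ite, Finset.prod_const_one, one_mul, Finset.prod_const, wt_card]

lemma g_prod_fac {n : ℕ} (g : ℕ → ℝ) (hg : ∀ d ≤ n, g d = (-1 : ℝ)^d * 2^(n - d))
    (u : QIdx n) : (g (hammingDist u (0 : QIdx n)) : ℂ) = ∏ ℓ, hfac (u ℓ) := by
  set d := hammingDist u (0 : QIdx n) with hd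
  have hdn : d ≤ n := le_trans hammingDist_le_card_fintype (by simp)
  have hfix : ∀ e : Fin 2, hfac e = if e = 0 then (2:ℂ) else -1 := by
    intro e
    fin_cases e <;> simp [hfac]
  have : (∏ ℓ, hfac (u ℓ)) = (∏ ℓ, if u ℓ = 0 then (2:ℂ) else -1) := by
    apply Finset.prod_congr rfl; intro ℓ _; rw [hfix]
  rw [this, Finset.prod_ite, Finset.prod_const, Finset.prod_const]
  have hcard1 : (Finset.univ.filter fun ℓ => ¬ (u ℓ = 0)).card = d := by
    rw [hd, wt_card]
  have hcard0 : (Finset.univ.filter fun ℓ => u ℓ = 0).card = n - d := by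
    have := Finset.card_filter_add_card_filter_not (s := (Finset.univ : Finset (Fin n)))
      (p := fun ℓ => u ℓ = 0)
    rw [Finset.card_univ, Fintype.card_fin] at this
    omega
  rw [hcard0, hcard1, hg d hdn]
  push_cast
  ring

lemma backward (n : ℕ) (g : ℕ → ℝ) (hg : ∀ d ≤ n, g d = (-1 : ℝ)^d * 2^(n - d)) :
    avgOp n g = swapOp n := by
  funext p q
  rw [key, swap_prod]
  have step : ∀ u : QIdx n, (g (hammingDist u (0 : QIdx n)) : ℂ) *
      ∏ ℓ, Nmat (u ℓ) (p.1 ℓ, p.2 ℓ) (q.1 ℓ, q.2 ℓ)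
      = ∏ ℓ, (hfac (u ℓ) * Nmat (u ℓ) (p.1 ℓ, p.2 ℓ) (q.1 ℓ, q.2 ℓ)) := by
    intro u
    rw [g_prod_fac g hg, Finset.prod_mul_distrib]
  simp only [step]
  rw [sum_pi_prod (fun ℓ e => hfac e * Nmat e (p.1 ℓ, p.2 ℓ) (q.1 ℓ, q.2 ℓ))]
  exact Finset.prod_congr rfl fun ℓ _ => hfac_N _ _

lemma Wval (e v2 : Fin 2) :
    Nmat e ((0 : Fin 2), (1 : Fin 2)) (v2, v2 + 1) = if v2 = 0 then alf e else bet e := by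
  rw [Nmat_eq]
  fin_cases v2 <;> simp <;> decide

lemma forward (n : ℕ) (g : ℕ → ℝ) (H : avgOp n g = swapOp n) :
    ∀ d ≤ n, g d = (-1 : ℝ)^d * 2^(n - d) := by
  set g0 : ℕ → ℝ := fun d => (-1 : ℝ)^d * 2^(n - d) with hg0
  have H0 : avgOp n g0 = swapOp n := backward n g0 (fun d _ => rfl)
  set δ : QIdx n → ℂ := fun u =>
    (g (hammingDist u (0 : QIdx n)) : ℂ) - (g0 (hammingDist u (0 : QIdx n)) : ℂ) with hδ
  -- entry equations
  have EA : ∀ v : QIdx n,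
      (∑ u : QIdx n, δ u * ∏ ℓ, Nmat (u ℓ) ((0:Fin 2), (1:Fin 2)) (v ℓ, v ℓ + 1)) = 0 := by
    intro v
    have h1 := congr_fun (congr_fun H ((fun _ => (0:Fin 2)), (fun _ => (1:Fin 2))))
      ((fun ℓ => v ℓ), (fun ℓ => v ℓ + 1))
    have h2 := congr_fun (congr_fun H0 ((fun _ => (0:Fin 2)), (fun _ => (1:Fin 2))))
      ((fun ℓ => v ℓ), (fun ℓ => v ℓ + 1))
    rw [key] at h1 h2
    simp only [hδ, sub_mul, Finset.sum_sub_distrib]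
    rw [h1, h2]
    ring
  
  -- gamma/z step
  have EZ : ∀ z : ℂ, z ≠ -1 → (∑ u : QIdx n, δ u * z ^ (hammingDist u (0 : QIdx n))) = 0 := by
    intro z hz
    have hz' : (1 : ℂ) + z ≠ 0 := fun h => hz (by linear_combination h)
    set γ : ℂ := (2 - z) / (1 + z) with hγ
    set cf : Fin 2 → ℂ := fun v2 => if v2 = 0 then 1 else γ with hcf
    have comb : (∑ v : QIdx n, (∏ ℓ, cf (v ℓ)) *
        (∑ u : QIdx n, δ u * ∏ ℓ, Nmat (u ℓ) ((0:Fin 2), (1:Fin 2)) (v ℓ, v ℓ + 1))) = 0 := by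
      simp only [EA, mul_zero, Finset.sum_const_zero]
    have rearr : (∑ v : QIdx n, (∏ ℓ, cf (v ℓ)) *
        (∑ u : QIdx n, δ u * ∏ ℓ, Nmat (u ℓ) ((0:Fin 2), (1:Fin 2)) (v ℓ, v ℓ + 1)))
        = ∑ u : QIdx n, δ u * ∏ ℓ, (∑ v2 : Fin 2,
            cf v2 * Nmat (u ℓ) ((0:Fin 2), (1:Fin 2)) (v2, v2 + 1)) := by
      simp only [Finset.mul_sum]
      rw [Finset.sum_comm]
      apply Finset.sum_congr rfl
      intro u _
      have hterm : ∀ v : QIdx n, (∏ ℓ, cf (v ℓ)) *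
          (δ u * ∏ ℓ, Nmat (u ℓ) ((0:Fin 2), (1:Fin 2)) (v ℓ, v ℓ + 1))
          = δ u * ∏ ℓ, (cf (v ℓ) * Nmat (u ℓ) ((0:Fin 2), (1:Fin 2)) (v ℓ, v ℓ + 1)) := by
        intro v
        rw [Finset.prod_mul_distrib]
        ring
      simp only [hterm, ← Finset.mul_sum]
      rw [sum_pi_prod (fun ℓ v2 => cf v2 * Nmat (u ℓ) ((0:Fin 2), (1:Fin 2)) (v2, v2 + 1))]
    have sval : ∀ e : Fin 2, (∑ v2 : Fin 2,
        cf v2 * Nmat e ((0:Fin 2), (1:Fin 2)) (v2, v2 + 1)) = alf e + γ * bet e := by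
      intro e
      rw [Fin.sum_univ_two, Wval, Wval]
      simp [hcf]
    have skey : ∀ e : Fin 2, (1 + z) * (alf e + γ * bet e) = if e = 0 then 1 else z := by
      intro e
      fin_cases e <;>
      · simp only [alf, bet, hγ, Matrix.cons_val_zero, Matrix.cons_val_one, Matrix.head_cons,
          Fin.mk_zero, Fin.mk_one, if_pos, if_neg, one_ne_zero, if_false]
        rw [div_mul_eq_mul_div, ← mul_div_assoc, mul_div_assoc]
        rw [eq_comm]
        field_simp
        ring
    have main : (∑ u : QIdx n, δ u * ∏ ℓ, (∑ v2 : Fin 2,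
        cf v2 * Nmat (u ℓ) ((0:Fin 2), (1:Fin 2)) (v2, v2 + 1))) = 0 := by
      rw [← rearr]; exact comb
    have expand : ∀ u : QIdx n, δ u * z ^ (hammingDist u (0 : QIdx n))
        = (1 + z)^n * (δ u * ∏ ℓ, (∑ v2 : Fin 2,
            cf v2 * Nmat (u ℓ) ((0:Fin 2), (1:Fin 2)) (v2, v2 + 1))) := by
      intro u
      rw [← prod_ite_pow u z]
      have : ∀ ℓ : Fin n, (if u ℓ = 0 then (1:ℂ) else z)
          = (1 + z) * (∑ v2 : Fin 2, cf v2 * Nmat (u ℓ) ((0:Fin 2), (1:Fin 2)) (v2, v2 + 1)) := by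
        intro ℓ
        rw [sval, skey]
      simp only [this]
      rw [Finset.prod_mul_distrib, Finset.prod_const, Finset.card_univ, Fintype.card_fin]
      ring
    simp only [expand, ← Finset.mul_sum]
    rw [main, mul_zero]
  -- polynomial argument
  set P : Polynomial ℂ :=
    ∑ u : QIdx n, Polynomial.C (δ u) * Polynomial.X ^ (hammingDist u (0 : QIdx n)) with hP
  have hPeval : ∀ z : ℂ, z ≠ -1 → P.eval z = 0 := by
    intro z hz
    rw [hP, Polynomial.eval_finset_sum]
    simpa using EZ z hz
  have hP0 : P = 0 := by
    apply Polynomial.eq_zero_of_infinite_isRoot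
    have hsub : ({-1}ᶜ : Set ℂ) ⊆ {x | P.IsRoot x} := by
      intro z hz
      exact hPeval z hz
    exact ((Set.finite_singleton (-1)).infinite_compl).mono hsub
  intro d hdn
  have hcoeff : P.coeff d = 0 := by rw [hP0]; simp
  rw [hP, Polynomial.finset_sum_coeff] at hcoeff
  have hterm : ∀ u : QIdx n,
      (Polynomial.C (δ u) * Polynomial.X ^ (hammingDist u (0 : QIdx n))).coeff d
      = if hammingDist u (0 : QIdx n) = d then δ u else 0 := by
    intro u
    rw [Polynomial.coeff_C_mul, Polynomial.coeff_X_pow]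
    split_ifs with h h' h'
    · ring
    · exact absurd h.symm h'
    · exact absurd h'.symm h
    · ring
  rw [Finset.sum_congr rfl (fun u _ => hterm u)] at hcoeff
  rw [← Finset.sum_filter] at hcoeff
  have hval : ∀ u ∈ Finset.univ.filter (fun u : QIdx n => hammingDist u (0 : QIdx n) = d),
      δ u = (g d : ℂ) - (g0 d : ℂ) := by
    intro u hu
    rw [Finset.mem_filter] at hu
    simp only [hδ]
    rw [hu.2]
  rw [Finset.sum_congr rfl hval, Finset.sum_const, nsmul_eq_mul] at hcoeff
  -- the filter is nonempty
  set w : QIdx n := fun ℓ => if (ℓ : ℕ) < d then (1 : Fin 2) else 0 with hwdef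
  have hwwt : hammingDist w (0 : QIdx n) = d := by
    rw [wt_card]
    have hfilt : (Finset.univ.filter fun ℓ : Fin n => ¬ (w ℓ = 0))
        = (Finset.univ.filter fun ℓ : Fin n => (ℓ : ℕ) < d) := by
      apply Finset.filter_congr
      intro ℓ _
      simp only [hwdef]
      split_ifs with h <;> simp [h]
    rw [hfilt]
    apply Finset.card_eq_of_bijective (fun i h => (⟨i, lt_of_lt_of_le h hdn⟩ : Fin n))
    · intro a ha
      rw [Finset.mem_filter] at ha
      exact ⟨(a : ℕ), ha.2, by simp⟩
    · intro i h
      rw [Finset.mem_filter]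
      exact ⟨Finset.mem_univ _, h⟩
    · intro i j hi hj hij
      simpa [Fin.ext_iff] using hij
  have hmem : w ∈ Finset.univ.filter (fun u : QIdx n => hammingDist u (0 : QIdx n) = d) := by
    rw [Finset.mem_filter]
    exact ⟨Finset.mem_univ _, hwwt⟩
  have hcard : ((Finset.univ.filter
      (fun u : QIdx n => hammingDist u (0 : QIdx n) = d)).card : ℂ) ≠ 0 := by
    have : 0 < (Finset.univ.filter
        (fun u : QIdx n => hammingDist u (0 : QIdx n) = d)).card :=
      Finset.card_pos.mpr ⟨w, hmem⟩
    exact_mod_cast Nat.cast_ne_zero.mpr this.ne'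
  have hzero : (g d : ℂ) - (g0 d : ℂ) = 0 := by
    rcases mul_eq_zero.mp hcoeff with h | h
    · exact absurd h hcard
    · exact h
  have : (g d : ℂ) = (g0 d : ℂ) := by linear_combination hzero
  have hreal : g d = g0 d := by exact_mod_cast this
  rw [hreal, hg0]

/-- For `n ≥ 1`, the averaged operator `Ω̄_g` of a Hamming-distance
kernel equals the full swap operator if and only if `g(d) = (−1)^d 2^{n−d}` for all
`0 ≤ d ≤ n`. -/
theorem unique_unbiased_hamming_kernel (n : ℕ) (hn : 1 ≤ n) (g : ℕ → ℝ) :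
    avgOp n g = swapOp n ↔ ∀ d ≤ n, g d = (-1 : ℝ)^d * 2^(n - d) :=
  ⟨forward n g, backward n g⟩
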